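/- arXiv:1203.6855 — 3 statements merged into one kernel-verified Lean document; each statement's English description precedes it below -/
import Mathlib

section
/- Let K be a compact Hausdorff space such that every bounded linear operator on C(K) is a weak multiplication, let L = K × Bool (Bool discrete), and let J : C(L) → C(L) be the swap operator (Jf)(x,b) = f(x,¬b). Let T be a bounded linear operator on C(L) and let i, j ∈ Bool with i ≠ j. Then there exist g ∈ C(L) and a weakly compact operator S on C(L) such that σ_j ∘ π_j ∘ T ∘ σ_i ∘ π_i = g·J + S, where g·J denotes the operator f ↦ g·(Jf). -/
open Filter Topology

/-- A bounded linear operator `T` on `C(K, ℝ)` is a *weak multiplier* if for every bounded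
pairwise disjoint sequence `(e_n)` in `C(K, ℝ)` and every sequence `(x_n)` in `K` with
`e_n (x_n) = 0` for all `n`, one has `T (e_n) (x_n) → 0`. -/
def IsWeakMultiplier {K : Type*} [TopologicalSpace K] [CompactSpace K]
    (T : C(K, ℝ) →L[ℝ] C(K, ℝ)) : Prop :=
  ∀ (e : ℕ → C(K, ℝ)) (x : ℕ → K),
    (∃ M : ℝ, ∀ n, ‖e n‖ ≤ M) →
    (∀ i j, i ≠ j → e i * e j = 0) →
    (∀ n, (e n) (x n) = 0) →
    Filter.Tendsto (fun n => (T (e n)) (x n)) Filter.atTop (nhds 0)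

/-- An operator on `C(K, ℝ)` is *weakly compact* if the image of the closed unit ball has
compact closure in the weak topology. -/
def IsWeaklyCompactOp {K : Type*} [TopologicalSpace K] [CompactSpace K]
    (S : C(K, ℝ) →L[ℝ] C(K, ℝ)) : Prop :=
  IsCompact (closure ((toWeakSpace ℝ C(K, ℝ)) '' (S '' Metric.closedBall 0 1)))

/-- An operator on `C(K, ℝ)` is a *weak multiplication* if it has the form `g•I + S` with
`g ∈ C(K, ℝ)` and `S` weakly compact. -/
def IsWeakMultiplication {K : Type*} [TopologicalSpace K] [CompactSpace K]
    (T : C(K, ℝ) →L[ℝ] C(K, ℝ)) : Prop :=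
  ∃ (g : C(K, ℝ)) (S : C(K, ℝ) →L[ℝ] C(K, ℝ)),
    IsWeaklyCompactOp S ∧ T = ContinuousLinearMap.mul ℝ C(K, ℝ) g + S

/-- A subset `A` of a real vector space is *lineable* if `A ∪ {0}` contains an
infinite-dimensional subspace. -/
def Lineable {X : Type*} [AddCommGroup X] [Module ℝ X] (A : Set X) : Prop :=
  ∃ W : Submodule ℝ X, ¬ FiniteDimensional ℝ W ∧ (W : Set X) ⊆ A ∪ {0}

/-- A subset `A` of a real normed space is *spaceable* if `A ∪ {0}` contains a closed
infinite-dimensional subspace. -/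
def Spaceable {X : Type*} [NormedAddCommGroup X] [NormedSpace ℝ X] (A : Set X) : Prop :=
  ∃ W : Submodule ℝ X, IsClosed (W : Set X) ∧ ¬ FiniteDimensional ℝ W ∧ (W : Set X) ⊆ A ∪ {0}

/-- The swap operator `J` on `C(K × Bool, ℝ)`, `(J f)(x, b) = f (x, ¬b)`. -/
noncomputable def swapOp (K : Type*) [TopologicalSpace K] [CompactSpace K] :
    C(K × Bool, ℝ) →L[ℝ] C(K × Bool, ℝ) :=
  LinearMap.mkContinuous
    { toFun := fun f => f.comp
        ⟨fun p => (p.1, !p.2),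
          continuous_fst.prodMk ((continuous_of_discreteTopology (f := fun b : Bool => !b)).comp continuous_snd)⟩
      map_add' := fun f g => rfl
      map_smul' := fun c f => rfl }
    1
    (fun f => by
      rw [one_mul]
      exact (ContinuousMap.norm_le _ (norm_nonneg f)).mpr fun p => f.norm_coe_le_norm _)

@[simp] theorem swapOp_apply {K : Type*} [TopologicalSpace K] [CompactSpace K]
    (f : C(K × Bool, ℝ)) (p : K × Bool) : swapOp K f p = f (p.1, !p.2) := rfl

/-- The restriction operator `π_i : C(K × Bool, ℝ) → C(K, ℝ)`, `π_i(f)(x) = f (x, i)`. -/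
noncomputable def piOp (K : Type*) [TopologicalSpace K] [CompactSpace K] (i : Bool) :
    C(K × Bool, ℝ) →L[ℝ] C(K, ℝ) :=
  LinearMap.mkContinuous
    { toFun := fun f => f.comp ⟨fun x => (x, i), continuous_id.prodMk continuous_const⟩
      map_add' := fun f g => rfl
      map_smul' := fun c f => rfl }
    1
    (fun f => by
      rw [one_mul]
      exact (ContinuousMap.norm_le _ (norm_nonneg f)).mpr fun x => f.norm_coe_le_norm _)

@[simp] theorem piOp_apply {K : Type*} [TopologicalSpace K] [CompactSpace K] (i : Bool)
    (f : C(K × Bool, ℝ)) (x : K) : piOp K i f x = f (x, i) := rfl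

/-- The extension operator `σ_i : C(K, ℝ) → C(K × Bool, ℝ)`, `σ_i(g)(x, b) = g x` if `b = i`
and `0` otherwise. -/
noncomputable def sigmaOp (K : Type*) [TopologicalSpace K] [CompactSpace K] (i : Bool) :
    C(K, ℝ) →L[ℝ] C(K × Bool, ℝ) :=
  LinearMap.mkContinuous
    { toFun := fun g =>
        ⟨fun p => if p.2 = i then g p.1 else 0, by
          have : (fun p : K × Bool => if p.2 = i then g p.1 else 0)
              = fun p : K × Bool => (if p.2 = i then (1 : ℝ) else 0) * g p.1 := by
            funext p
            by_cases h : p.2 = i <;> simp [h]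
          rw [this]
          exact (((continuous_of_discreteTopology
              (f := fun b : Bool => if b = i then (1 : ℝ) else 0)).comp
            continuous_snd).mul (g.continuous.comp continuous_fst))⟩
      map_add' := fun f g => by
        ext p
        by_cases h : p.2 = i <;> simp [h]
      map_smul' := fun c f => by
        ext p
        by_cases h : p.2 = i <;> simp [h] }
    1
    (fun g => by
      rw [one_mul]
      refine (ContinuousMap.norm_le _ (norm_nonneg g)).mpr fun p => ?_
      simp only [ContinuousMap.coe_mk, LinearMap.coe_mk, AddHom.coe_mk]
      by_cases h : p.2 = i
      · simpa [h] using g.norm_coe_le_norm p.1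
      · simp [h])

@[simp] theorem sigmaOp_apply {K : Type*} [TopologicalSpace K] [CompactSpace K] (i : Bool)
    (g : C(K, ℝ)) (p : K × Bool) : sigmaOp K i g p = if p.2 = i then g p.1 else 0 := rfl


section AuxWC

lemma weakSpace_t2' {E : Type*} [NormedAddCommGroup E] [NormedSpace ℝ E] :
    T2Space (WeakSpace ℝ E) := by
  refine (WeakBilin.isEmbedding (B := (topDualPairing ℝ E).flip) ?_).t2Space
  refine (injective_iff_map_eq_zero _).mpr fun x hx => ?_
  refine NormedSpace.eq_zero_of_forall_dual_eq_zero ℝ fun f => ?_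
  exact congrFun (congrArg DFunLike.coe hx) f

lemma comp_weaklyCompact' {K L : Type*} [TopologicalSpace K] [CompactSpace K]
    [TopologicalSpace L] [CompactSpace L]
    (A : C(K, ℝ) →L[ℝ] C(L, ℝ)) (S₀ : C(K, ℝ) →L[ℝ] C(K, ℝ)) (B : C(L, ℝ) →L[ℝ] C(K, ℝ))
    (hS : IsCompact (closure ((toWeakSpace ℝ C(K, ℝ)) '' (S₀ '' Metric.closedBall 0 1))))
    (hB : ∀ f, ‖B f‖ ≤ ‖f‖) :
    IsWeaklyCompactOp (A.comp (S₀.comp B)) := by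
  haveI : T2Space (WeakSpace ℝ C(L, ℝ)) := weakSpace_t2'
  set C := closure ((toWeakSpace ℝ C(K, ℝ)) '' (S₀ '' Metric.closedBall 0 1))
  have hKc : IsCompact ((WeakSpace.map A) '' C) := hS.image (WeakSpace.map A).continuous
  have hsub : (toWeakSpace ℝ C(L, ℝ)) '' ((A.comp (S₀.comp B)) '' Metric.closedBall 0 1)
      ⊆ (WeakSpace.map A) '' C := by
    rintro - ⟨-, ⟨f, hf, rfl⟩, rfl⟩
    refine ⟨toWeakSpace ℝ C(K, ℝ) (S₀ (B f)), subset_closure ⟨S₀ (B f), ⟨B f, ?_, rfl⟩, rfl⟩, rfl⟩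
    simp only [Metric.mem_closedBall, dist_zero_right] at hf ⊢
    exact (hB f).trans hf
  exact hKc.of_isClosed_subset isClosed_closure (closure_minimal hsub hKc.isClosed)

end AuxWC

/-- If every operator on `C(K, ℝ)` is a weak multiplication, then for every operator `T` on
`C(K × Bool, ℝ)` and all `i ≠ j` in `Bool`, the operator `σ_j ∘ π_j ∘ T ∘ σ_i ∘ π_i` has the
form `g·J + S` with `g ∈ C(K × Bool, ℝ)`, `J` the swap operator and `S` weakly compact. -/
theorem offdiagonal_component_decomposition
    {K : Type*} [TopologicalSpace K] [CompactSpace K] [T2Space K]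
    (hfew : ∀ S : C(K, ℝ) →L[ℝ] C(K, ℝ), IsWeakMultiplication S)
    (T : C(K × Bool, ℝ) →L[ℝ] C(K × Bool, ℝ)) (i j : Bool) (hij : i ≠ j) :
    ∃ (g : C(K × Bool, ℝ)) (S : C(K × Bool, ℝ) →L[ℝ] C(K × Bool, ℝ)),
      IsWeaklyCompactOp S ∧
      (sigmaOp K j).comp ((piOp K j).comp (T.comp ((sigmaOp K i).comp (piOp K i))))
        = (ContinuousLinearMap.mul ℝ C(K × Bool, ℝ) g).comp (swapOp K) + S := by
  obtain ⟨h, S₀, hS₀, hA⟩ := hfew ((piOp K j).comp (T.comp (sigmaOp K i)))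
  have hni : (!j) = i := by cases i <;> cases j <;> simp_all
  refine ⟨sigmaOp K j h, (sigmaOp K j).comp (S₀.comp (piOp K i)), ?_, ?_⟩
  · exact comp_weaklyCompact' _ _ _ hS₀ (fun f =>
      (ContinuousMap.norm_le _ (norm_nonneg f)).mpr fun x => f.norm_coe_le_norm _)
  · have hA' : ∀ u : C(K, ℝ), (piOp K j) (T ((sigmaOp K i) u)) = h * u + S₀ u := by
      intro u
      have := congrFun (congrArg DFunLike.coe hA) u
      simpa [ContinuousLinearMap.mul_apply'] using this
    ext f p
    simp only [ContinuousLinearMap.comp_apply, ContinuousLinearMap.add_apply,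
      ContinuousLinearMap.mul_apply', hA' (piOp K i f), sigmaOp_apply, swapOp_apply,
      ContinuousMap.add_apply, ContinuousMap.mul_apply, piOp_apply]
    by_cases hp : p.2 = j
    · simp [hp, hni]
    · simp [hp]
end

section
/- Let K be an infinite compact Hausdorff space such that every bounded linear operator on C(K) is a weak multiplication, let L = K × Bool (Bool discrete), and define J' : C(L) → C(L) by (J'f)(x,false) = −f(x,true) and (J'f)(x,true) = f(x,false). Then J' ∘ J' = −I (where I is the identity operator on C(L)), J' is not a weak multiplier, and every bounded linear operator T on C(L) can be written as T = g·J' + W, where g ∈ C(L) (g·J' denotes the operator f ↦ g·(J'f)) and W is a weak multiplication on C(L). -/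
open Filter Topology

/-- The skew swap operator `J'` on `C(K × Bool, ℝ)`: `(J' f)(x, false) = -f (x, true)` and
`(J' f)(x, true) = f (x, false)`. -/
noncomputable def skewSwapOp (K : Type*) [TopologicalSpace K] [CompactSpace K] :
    C(K × Bool, ℝ) →L[ℝ] C(K × Bool, ℝ) :=
  LinearMap.mkContinuous
    { toFun := fun f =>
        ⟨fun p => if p.2 then f (p.1, false) else -f (p.1, true), by
          have : (fun p : K × Bool => if p.2 then f (p.1, false) else -f (p.1, true))
              = fun p : K × Bool => (if p.2 then (1 : ℝ) else 0) * f (p.1, false)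
                  + (if p.2 then (0 : ℝ) else -1) * f (p.1, true) := by
            funext p
            rcases p with ⟨x, b⟩
            cases b <;> simp
          rw [this]
          have h1 : Continuous fun p : K × Bool => f (p.1, false) :=
            f.continuous.comp (continuous_fst.prodMk continuous_const)
          have h2 : Continuous fun p : K × Bool => f (p.1, true) :=
            f.continuous.comp (continuous_fst.prodMk continuous_const)
          exact ((((continuous_of_discreteTopology
                (f := fun b : Bool => if b then (1 : ℝ) else 0)).comp
              continuous_snd).mul h1).add
            (((continuous_of_discreteTopology
                (f := fun b : Bool => if b then (0 : ℝ) else -1)).comp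
              continuous_snd).mul h2))⟩
      map_add' := fun f g => by
        ext p
        rcases p with ⟨x, b⟩
        cases b <;> simp <;> ring
      map_smul' := fun c f => by
        ext p
        rcases p with ⟨x, b⟩
        cases b <;> simp }
    1
    (fun f => by
      rw [one_mul]
      refine (ContinuousMap.norm_le _ (norm_nonneg f)).mpr fun p => ?_
      rcases p with ⟨x, b⟩
      cases b
      · simpa using f.norm_coe_le_norm (x, true)
      · simpa using f.norm_coe_le_norm (x, false))

@[simp] theorem skewSwapOp_apply {K : Type*} [TopologicalSpace K] [CompactSpace K]
    (f : C(K × Bool, ℝ)) (p : K × Bool) :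
    skewSwapOp K f p = if p.2 then f (p.1, false) else -f (p.1, true) := rfl

section WC
variable {E F G H : Type*} [NormedAddCommGroup E] [NormedSpace ℝ E]
  [NormedAddCommGroup F] [NormedSpace ℝ F] [NormedAddCommGroup G] [NormedSpace ℝ G]
  [NormedAddCommGroup H] [NormedSpace ℝ H]

theorem myWeakSpaceT2 : T2Space (WeakSpace ℝ E) := by
  refine (t2Space_iff _).2 fun {x y} hxy => ?_
  obtain ⟨f, hf⟩ := SeparatingDual.exists_separating_of_ne (R := ℝ) (V := E)
    ((toWeakSpace ℝ E).symm.injective.ne hxy)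
  exact separated_by_continuous (WeakBilin.eval_continuous ((topDualPairing ℝ E).flip) f) hf

theorem myWC_conj (A : F →L[ℝ] G) (B : H →L[ℝ] E) {S : E →L[ℝ] F}
    (hS : IsCompact (closure ((toWeakSpace ℝ F) '' (S '' Metric.closedBall 0 1)))) :
    IsCompact (closure ((toWeakSpace ℝ G) '' ((A.comp (S.comp B)) '' Metric.closedBall 0 1))) := by
  haveI : T2Space (WeakSpace ℝ G) := myWeakSpaceT2
  set c : ℝ := ‖B‖ + 1 with hc
  have hcpos : (0:ℝ) < c := by positivity
  set φ := WeakSpace.map (𝕜 := ℝ) (c • A) with hφ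
  have hcomp : IsCompact (φ '' closure ((toWeakSpace ℝ F) '' (S '' Metric.closedBall 0 1))) :=
    hS.image φ.continuous
  refine hcomp.of_isClosed_subset isClosed_closure (closure_minimal ?_ hcomp.isClosed)
  rintro _ ⟨_, ⟨x, hx, rfl⟩, rfl⟩
  have hBx : ‖B x‖ ≤ c := by
    have h1 := B.le_opNorm x
    have h2 : ‖x‖ ≤ 1 := by simpa [Metric.mem_closedBall, dist_zero_right] using hx
    nlinarith [norm_nonneg B]
  have hmem : c⁻¹ • B x ∈ Metric.closedBall (0:E) 1 := by
    simp only [Metric.mem_closedBall, dist_zero_right, norm_smul, Real.norm_eq_abs,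
      abs_of_pos (inv_pos.2 hcpos)]
    calc c⁻¹ * ‖B x‖ ≤ c⁻¹ * c := by
          exact mul_le_mul_of_nonneg_left hBx (le_of_lt (inv_pos.2 hcpos))
      _ = 1 := inv_mul_cancel₀ (ne_of_gt hcpos)
  refine ⟨toWeakSpace ℝ F (S (c⁻¹ • B x)), subset_closure ⟨_, ⟨_, hmem, rfl⟩, rfl⟩, ?_⟩
  show (c • A) (S (c⁻¹ • B x)) = toWeakSpace ℝ G ((A.comp (S.comp B)) x)
  have : c • (c⁻¹ • B x) = B x := by
    rw [smul_smul, mul_inv_cancel₀ (ne_of_gt hcpos), one_smul]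
  calc (c • A) (S (c⁻¹ • B x)) = c • A (S (c⁻¹ • B x)) := rfl
    _ = A (S (c • c⁻¹ • B x)) := by simp only [← map_smul]
    _ = A (S (B x)) := by rw [this]
    _ = ((A.comp (S.comp B)) x : G) := rfl

theorem myWC_add {S1 S2 : E →L[ℝ] F}
    (h1 : IsCompact (closure ((toWeakSpace ℝ F) '' (S1 '' Metric.closedBall 0 1))))
    (h2 : IsCompact (closure ((toWeakSpace ℝ F) '' (S2 '' Metric.closedBall 0 1)))) :
    IsCompact (closure ((toWeakSpace ℝ F) '' ((S1 + S2) '' Metric.closedBall 0 1))) := by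
  haveI : T2Space (WeakSpace ℝ F) := myWeakSpaceT2
  have hsum := h1.add h2
  refine hsum.of_isClosed_subset isClosed_closure (closure_minimal ?_ hsum.isClosed)
  rintro _ ⟨_, ⟨x, hx, rfl⟩, rfl⟩
  have : toWeakSpace ℝ F ((S1 + S2) x) = toWeakSpace ℝ F (S1 x) + toWeakSpace ℝ F (S2 x) := by
    rw [ContinuousLinearMap.add_apply, map_add]
  rw [this]
  exact Set.add_mem_add (subset_closure ⟨_, ⟨x, hx, rfl⟩, rfl⟩)
    (subset_closure ⟨_, ⟨x, hx, rfl⟩, rfl⟩)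
end WC

theorem myDisjointOpens {K : Type*} [TopologicalSpace K] [CompactSpace K] [T2Space K]
    [Infinite K] :
    ∃ (x : ℕ → K) (U : ℕ → Set K), (∀ n, IsOpen (U n)) ∧ (∀ n, x n ∈ U n) ∧
      ∀ i j, i ≠ j → Disjoint (U i) (U j) := by
  have step : ∀ (S V : Set K), S.Infinite → IsOpen V → S ⊆ V →
      ∃ (z : K) (U V' : Set K), z ∈ U ∧ IsOpen U ∧ U ⊆ V ∧ IsOpen V' ∧ V' ⊆ V ∧
        Disjoint U V' ∧ (S ∩ V').Infinite := by
    intro S V hS hV hSV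
    obtain ⟨a, ha, b, hb, hab⟩ := hS.nontrivial
    obtain ⟨u, v, hu, hv, hau, hbv, huv⟩ := t2_separation hab
    by_cases h : (S \ u).Infinite
    · obtain ⟨t, htm, htc, hts⟩ :=
        exists_mem_nhds_isClosed_subset ((hu.inter hV).mem_nhds ⟨hau, hSV ha⟩)
      refine ⟨a, interior t, V \ t, mem_interior_iff_mem_nhds.2 htm, isOpen_interior,
        fun z hz => (hts (interior_subset hz)).2, hV.sdiff htc, Set.diff_subset, ?_, ?_⟩
      · exact Set.disjoint_left.2 fun z hz hz' => hz'.2 (interior_subset hz)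
      · exact h.mono fun z hz => ⟨hz.1, hSV hz.1, fun hzt => hz.2 (hts hzt).1⟩
    · have h2 : (S ∩ u).Infinite := by
        have := hS.diff (Set.not_infinite.mp h)
        rwa [Set.diff_diff_right_self] at this
      obtain ⟨t, htm, htc, hts⟩ :=
        exists_mem_nhds_isClosed_subset ((hv.inter hV).mem_nhds ⟨hbv, hSV hb⟩)
      refine ⟨b, interior t, V \ t, mem_interior_iff_mem_nhds.2 htm, isOpen_interior,
        fun z hz => (hts (interior_subset hz)).2, hV.sdiff htc, Set.diff_subset, ?_, ?_⟩
      · exact Set.disjoint_left.2 fun z hz hz' => hz'.2 (interior_subset hz)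
      · exact h2.mono fun z hz =>
          ⟨hz.1, hSV hz.1, fun hzt => Set.disjoint_left.1 huv hz.2 (hts hzt).1⟩
  let State := {p : Set K × Set K // p.1.Infinite ∧ IsOpen p.2 ∧ p.1 ⊆ p.2}
  have key : ∀ p : State, ∃ (z : K) (U V' : Set K), z ∈ U ∧ IsOpen U ∧ U ⊆ p.1.2 ∧
      IsOpen V' ∧ V' ⊆ p.1.2 ∧ Disjoint U V' ∧ (p.1.1 ∩ V').Infinite :=
    fun p => step p.1.1 p.1.2 p.2.1 p.2.2.1 p.2.2.2
  choose z U V' h1 h2 h3 h4 h5 h6 h7 using key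
  let next : State → State := fun p => ⟨(p.1.1 ∩ V' p, V' p), h7 p, h4 p, Set.inter_subset_right⟩
  let chain : ℕ → State := fun n =>
    next^[n] ⟨(Set.univ, Set.univ), Set.infinite_univ, isOpen_univ, subset_rfl⟩
  have hchain : ∀ n, chain (n + 1) = next (chain n) := fun n =>
    Function.iterate_succ_apply' next n _
  have hV' : ∀ n, (chain (n + 1)).1.2 = V' (chain n) := fun n => by rw [hchain n]
  have mono : ∀ n k, (chain (n + 1 + k)).1.2 ⊆ V' (chain n) := by
    intro n k
    induction k with
    | zero => exact (hV' n).le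
    | succ k ih =>
      have : (chain (n + 1 + (k + 1))).1.2 = V' (chain (n + 1 + k)) := hV' (n + 1 + k)
      rw [this]
      exact (h5 (chain (n + 1 + k))).trans ih
  have hdisj : ∀ i j, i < j → Disjoint (U (chain i)) (U (chain j)) := by
    intro i j hij
    have : U (chain j) ⊆ V' (chain i) := by
      obtain ⟨k, rfl⟩ : ∃ k, j = i + 1 + k := ⟨j - (i+1), by omega⟩
      exact (h3 (chain (i + 1 + k))).trans (mono i k)
    exact ((h6 (chain i)).mono_right this)
  refine ⟨fun n => z (chain n), fun n => U (chain n), fun n => h2 _, fun n => h1 _, ?_⟩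
  intro i j hij
  rcases lt_or_gt_of_ne hij with h | h
  · exact hdisj i j h
  · exact (hdisj j i h).symm


/-- If every operator on `C(K, ℝ)` is a weak multiplication (`K` infinite compact Hausdorff),
then the operator `J'` on `C(K × Bool, ℝ)` defined by `(J' f)(x, false) = -f (x, true)` and
`(J' f)(x, true) = f (x, false)` satisfies `J' ∘ J' = -I`, `J'` is not a weak multiplier,
and every operator `T` on `C(K × Bool, ℝ)` has the form `g·J' + W` with `g ∈ C(K × Bool, ℝ)`
and `W` a weak multiplication. -/

theorem skewSwapOp_properties
    {K : Type*} [TopologicalSpace K] [CompactSpace K] [T2Space K] [Infinite K]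
    (hfew : ∀ S : C(K, ℝ) →L[ℝ] C(K, ℝ), IsWeakMultiplication S) :
    (skewSwapOp K).comp (skewSwapOp K) = -(ContinuousLinearMap.id ℝ C(K × Bool, ℝ)) ∧
    ¬ IsWeakMultiplier (skewSwapOp K) ∧
    ∀ T : C(K × Bool, ℝ) →L[ℝ] C(K × Bool, ℝ),
      ∃ (g : C(K × Bool, ℝ)) (W : C(K × Bool, ℝ) →L[ℝ] C(K × Bool, ℝ)),
        IsWeakMultiplication W ∧
        T = (ContinuousLinearMap.mul ℝ C(K × Bool, ℝ) g).comp (skewSwapOp K) + W := by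
  refine ⟨?_, ?_, ?_⟩
  · ext f p
    obtain ⟨x, b⟩ := p
    cases b <;> simp
  · intro hJ
    obtain ⟨x, U, hUo, hxU, hdisj⟩ := myDisjointOpens (K := K)
    have key : ∀ n, ∃ e : C(K, ℝ), e (x n) = 1 ∧ (∀ y, y ∉ U n → e y = 0) ∧
        ∀ y, |e y| ≤ 1 := by
      intro n
      obtain ⟨f, hf0, hf1, hficc⟩ := exists_continuous_zero_one_of_isClosed
        (hUo n).isClosed_compl isClosed_singleton
        (Set.disjoint_singleton_right.2 fun h => h (hxU n))
      refine ⟨f, hf1 rfl, fun y hy => hf0 hy, fun y => abs_le.2 ⟨?_, (hficc y).2⟩⟩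
      linarith [(hficc y).1]
    choose e he1 he0 hbd using key
    have := hJ (fun n => sigmaOp K true (e n)) (fun n => (x n, false)) ⟨1, ?_⟩ ?_ ?_
    · have hval : ∀ n, skewSwapOp K (sigmaOp K true (e n)) (x n, false) = -1 := by
        intro n
        simp [he1 n]
      have h1 : Tendsto (fun _ : ℕ => (-1 : ℝ)) atTop (nhds 0) := by
        simpa [hval] using this
      have := tendsto_nhds_unique h1 tendsto_const_nhds
      norm_num at this
    · intro n
      refine (ContinuousMap.norm_le _ zero_le_one).2 fun p => ?_
      obtain ⟨y, b⟩ := p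
      cases b
      · simp
      · simpa using hbd n y
    · intro i j hij
      ext ⟨y, b⟩
      cases b
      · simp
      · simp only [ContinuousMap.mul_apply, sigmaOp_apply, if_pos rfl,
          ContinuousMap.zero_apply]
        by_cases hy : y ∈ U i
        · simp [he0 j y (Set.disjoint_left.1 (hdisj i j hij) hy)]
        · simp [he0 i y hy]
    · intro n
      simp
  · intro T
    choose g S hwc heq using fun i j : Bool => hfew ((piOp K i).comp (T.comp (sigmaOp K j)))
    refine ⟨sigmaOp K true (g true false) - sigmaOp K false (g false true),
      ContinuousLinearMap.mul ℝ C(K × Bool, ℝ)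
          (sigmaOp K true (g true true) + sigmaOp K false (g false false)) +
        ((sigmaOp K true).comp ((S true true).comp (piOp K true)) +
         (sigmaOp K true).comp ((S true false).comp (piOp K false)) +
         (sigmaOp K false).comp ((S false true).comp (piOp K true)) +
         (sigmaOp K false).comp ((S false false).comp (piOp K false))),
      ⟨_, _, ?_, rfl⟩, ?_⟩
    · exact myWC_add (myWC_add (myWC_add (myWC_conj _ _ (hwc true true))
        (myWC_conj _ _ (hwc true false))) (myWC_conj _ _ (hwc false true)))
        (myWC_conj _ _ (hwc false false))
    · have hT : ∀ (i j : Bool) (u : C(K, ℝ)) (xx : K),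
          T (sigmaOp K j u) (xx, i) = g i j xx * u xx + S i j u xx := by
        intro i j u xx
        have h : (piOp K i).comp (T.comp (sigmaOp K j)) u =
            ContinuousLinearMap.mul ℝ C(K, ℝ) (g i j) u + S i j u := by
          rw [heq i j]; rfl
        calc T (sigmaOp K j u) (xx, i)
            = ((piOp K i).comp (T.comp (sigmaOp K j)) u) xx := rfl
          _ = (ContinuousLinearMap.mul ℝ C(K, ℝ) (g i j) u + S i j u) xx := by rw [h]
          _ = g i j xx * u xx + S i j u xx := rfl
      have hdecomp : ∀ f : C(K × Bool, ℝ),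
          f = sigmaOp K true (piOp K true f) + sigmaOp K false (piOp K false f) := by
        intro f
        ext ⟨xx, b⟩
        cases b <;> simp
      ext f p
      obtain ⟨xx, b⟩ := p
      have hfL : T f (xx, b) = T (sigmaOp K true (piOp K true f)) (xx, b) +
          T (sigmaOp K false (piOp K false f)) (xx, b) := by
        conv_lhs => rw [hdecomp f, map_add]
        rfl
      cases b
      · rw [hfL, hT false true, hT false false]
        simp only [ContinuousLinearMap.add_apply, ContinuousLinearMap.coe_comp',
          Function.comp_apply, ContinuousLinearMap.mul_apply', ContinuousMap.add_apply,
          ContinuousMap.mul_apply, ContinuousMap.sub_apply, sigmaOp_apply, piOp_apply,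
          skewSwapOp_apply]
        norm_num
        ring
      · rw [hfL, hT true true, hT true false]
        simp only [ContinuousLinearMap.add_apply, ContinuousLinearMap.coe_comp',
          Function.comp_apply, ContinuousLinearMap.mul_apply', ContinuousMap.add_apply,
          ContinuousMap.mul_apply, ContinuousMap.sub_apply, sigmaOp_apply, piOp_apply,
          skewSwapOp_apply]
        norm_num
        ring
end

section
/- Let K be a compact Hausdorff space with no non-trivial convergent sequence (i.e., no sequence of pairwise distinct points of K converges in K). If there exists a bounded linear operator T on C(K) which is not a weak multiplier, then the set of bounded linear operators on C(K) which are not weak multipliers is lineable in L(C(K)). -/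
open Filter Topology

section AuxLemmas
set_option linter.unusedSectionVars false
variable {K : Type*} [TopologicalSpace K] [CompactSpace K] [T2Space K]

/-- sup-norm bound for signed sums of pairwise disjoint functions -/
lemma norm_sum_disjoint_le {E : ℕ → C(K, ℝ)} {M : ℝ}
    (hM : ∀ n, ‖E n‖ ≤ M) (hd : ∀ i j, i ≠ j → E i * E j = 0)
    (s : ℕ → ℝ) (hs : ∀ n, |s n| ≤ 1) (N : ℕ) :
    ‖∑ n ∈ Finset.range N, s n • E n‖ ≤ M := by
  have hM0 : (0:ℝ) ≤ M := le_trans (norm_nonneg (E 0)) (hM 0)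
  rw [ContinuousMap.norm_le _ hM0]
  intro y
  rw [ContinuousMap.sum_apply]
  by_cases hz : ∃ n ∈ Finset.range N, (E n) y ≠ 0
  · obtain ⟨n₀, hn₀mem, hn₀⟩ := hz
    have hsum : ∑ n ∈ Finset.range N, (s n • E n) y = (s n₀ • E n₀) y := by
      refine Finset.sum_eq_single_of_mem n₀ hn₀mem ?_
      intro b _ hb
      have h0 : (E b) y * (E n₀) y = 0 := by
        have := hd b n₀ hb
        calc (E b) y * (E n₀) y = (E b * E n₀) y := rfl
          _ = 0 := by rw [this]; rfl
      have : (E b) y = 0 := by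
        rcases mul_eq_zero.mp h0 with h | h
        · exact h
        · exact absurd h hn₀
      simp [ContinuousMap.smul_apply, this]
    rw [hsum, ContinuousMap.smul_apply]
    have : ‖s n₀ • (E n₀) y‖ = |s n₀| * ‖(E n₀) y‖ := by
      simp [norm_smul, Real.norm_eq_abs]
    rw [smul_eq_mul]
    calc ‖s n₀ * (E n₀) y‖ = |s n₀| * |(E n₀) y| := abs_mul _ _
      _ ≤ 1 * ‖E n₀‖ := by
          apply mul_le_mul (hs n₀) (ContinuousMap.norm_coe_le_norm (E n₀) y)
            (abs_nonneg _) zero_le_one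
      _ ≤ M := by rw [one_mul]; exact hM n₀
  · push_neg at hz
    have : ∑ n ∈ Finset.range N, (s n • E n) y = 0 := by
      apply Finset.sum_eq_zero
      intro n hn
      simp [ContinuousMap.smul_apply, hz n hn]
    rw [this]; simpa using hM0

/-- disjoint bounded sequences cannot have |T e_n(x*)| ≥ δ at a fixed point -/
lemma no_const_witness (T : C(K, ℝ) →L[ℝ] C(K, ℝ)) (x₀ : K)
    {E : ℕ → C(K, ℝ)} {M δ : ℝ} (hδ : 0 < δ)
    (hM : ∀ n, ‖E n‖ ≤ M) (hd : ∀ i j, i ≠ j → E i * E j = 0)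
    (hval : ∀ n, δ ≤ |(T (E n)) x₀|) : False := by
  obtain ⟨N, hN⟩ := exists_nat_gt (‖T‖ * M / δ)
  have hNδ : ‖T‖ * M < N * δ := by
    rw [div_lt_iff₀ hδ] at hN; linarith
  set s : ℕ → ℝ := fun n => if 0 ≤ (T (E n)) x₀ then 1 else -1 with hs_def
  have hs : ∀ n, |s n| ≤ 1 := by
    intro n; simp only [hs_def]; split <;> simp
  set f : C(K, ℝ) := ∑ n ∈ Finset.range N, s n • E n with hf
  have hfn : ‖f‖ ≤ M := norm_sum_disjoint_le hM hd s hs N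
  have heval : (T f) x₀ = ∑ n ∈ Finset.range N, |(T (E n)) x₀| := by
    rw [hf, map_sum]
    rw [ContinuousMap.sum_apply]
    apply Finset.sum_congr rfl
    intro n _
    rw [map_smul]
    simp only [ContinuousMap.smul_apply, smul_eq_mul, hs_def]
    split
    · rw [one_mul, abs_of_nonneg ‹_›]
    · rw [neg_one_mul, abs_of_neg (lt_of_not_ge ‹_›)]
  have hlow : (N : ℝ) * δ ≤ (T f) x₀ := by
    rw [heval]
    calc (N : ℝ) * δ = ∑ _n ∈ Finset.range N, δ := by
          rw [Finset.sum_const, Finset.card_range, nsmul_eq_mul]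
      _ ≤ _ := Finset.sum_le_sum fun n _ => hval n
  have hup : (T f) x₀ ≤ ‖T‖ * M := by
    calc (T f) x₀ ≤ |(T f) x₀| := le_abs_self _
      _ ≤ ‖T f‖ := by rw [← Real.norm_eq_abs]; exact ContinuousMap.norm_coe_le_norm _ _
      _ ≤ ‖T‖ * ‖f‖ := T.le_opNorm f
      _ ≤ ‖T‖ * M := by
          apply mul_le_mul_of_nonneg_left hfn (norm_nonneg T)
  linarith


/-- in a compact space, a sequence with unique cluster point converges -/
lemma tendsto_of_unique_clusterPt {Y : ℕ → K} {p : K}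
    (h : ∀ q, MapClusterPt q Filter.atTop Y → q = p) :
    Tendsto Y atTop (𝓝 p) := by
  by_contra hn
  rw [Filter.not_tendsto_iff_exists_frequently_notMem] at hn
  obtain ⟨s, hs, hfreq⟩ := hn
  have hfreq' : ∃ᶠ n in atTop, Y n ∈ (interior s)ᶜ := by
    apply hfreq.mono
    intro n hn hmem
    exact hn (interior_subset hmem)
  have h2 : ∃ᶠ y in Filter.map Y Filter.atTop, y ∈ (interior s)ᶜ :=
    Filter.frequently_map.mpr hfreq'
  have hne : (Filter.map Y Filter.atTop ⊓ Filter.principal {y | y ∈ (interior s)ᶜ}).NeBot :=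
    Filter.frequently_iff_neBot.mp h2
  have hcpt : IsCompact ((interior s)ᶜ) := (isOpen_interior.isClosed_compl).isCompact
  haveI := hne
  obtain ⟨q, hq, hclq⟩ := hcpt.exists_clusterPt
    (f := Filter.map Y Filter.atTop ⊓ Filter.principal {y | y ∈ (interior s)ᶜ}) inf_le_right
  have : MapClusterPt q Filter.atTop Y := hclq.mono inf_le_left
  have hqp := h q this
  subst hqp
  exact hq (mem_interior_iff_mem_nhds.mpr hs)

/-- cluster points of a subsequence are cluster points -/
lemma mapClusterPt_of_subseq {Y : ℕ → K} {τ : ℕ → ℕ} (hτ : StrictMono τ) {q : K}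
    (h : MapClusterPt q Filter.atTop (Y ∘ τ)) : MapClusterPt q Filter.atTop Y := by
  have : Filter.map (Y ∘ τ) Filter.atTop ≤ Filter.map Y Filter.atTop := by
    rw [← Filter.map_map]
    exact Filter.map_mono (Filter.map_le_iff_le_comap.mpr hτ.tendsto_atTop.le_comap)
  exact ClusterPt.mono h this


/-- the witness sequence has no convergent subsequence -/
lemma no_conv_subseq
    (hK : ∀ (x : ℕ → K) (p : K), Function.Injective x →
      ¬ Filter.Tendsto x Filter.atTop (nhds p))
    (T : C(K, ℝ) →L[ℝ] C(K, ℝ)) {E : ℕ → C(K, ℝ)} {X : ℕ → K} {M δ : ℝ} (hδ : 0 < δ)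
    (hM : ∀ n, ‖E n‖ ≤ M) (hd : ∀ i j, i ≠ j → E i * E j = 0)
    (hval : ∀ n, δ ≤ |(T (E n)) (X n)|)
    (τ : ℕ → ℕ) (hτ : StrictMono τ) (p : K)
    (hconv : Tendsto (X ∘ τ) atTop (𝓝 p)) : False := by
  set Y := X ∘ τ with hY
  by_cases hc : ∃ y, {n | Y n = y}.Infinite
  · obtain ⟨y, hy⟩ := hc
    obtain ⟨τ', hτ'mono, hτ'⟩ := Filter.extraction_of_frequently_atTop
      (Nat.frequently_atTop_iff_infinite.mpr hy)
    refine no_const_witness T y hδ (E := fun n => E (τ (τ' n))) (M := M) (fun n => hM _) ?_ ?_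
    · intro i j hij
      exact hd _ _ fun hh => hij (hτ'mono.injective (hτ.injective hh))
    · intro n
      have := hval (τ (τ' n))
      rwa [show X (τ (τ' n)) = y from hτ' n] at this
  · push_neg at hc
    -- all fibers finite; extract injective subsequence via first occurrences
    set S : Set ℕ := {n | ∀ m, m < n → Y m ≠ Y n} with hS
    have hSinf : S.Infinite := by
      by_contra hfin
      rw [Set.not_infinite] at hfin
      have hrange : Set.range Y ⊆ Y '' S := by
        rintro _ ⟨n, rfl⟩
        have hex : ∃ m, Y m = Y n := ⟨n, rfl⟩
        classical
        refine ⟨Nat.find hex, ?_, Nat.find_spec hex⟩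
        intro m hm hmeq
        have : Y m = Y n := by rw [hmeq, Nat.find_spec hex]
        exact absurd this (Nat.find_min hex hm)
      have hrfin : (Set.range Y).Finite := (hfin.image Y).subset hrange
      have huniv : (Set.univ : Set ℕ).Finite := by
        have : (Set.univ : Set ℕ) ⊆ ⋃ y ∈ Set.range Y, {n | Y n = y} := by
          intro n _
          exact Set.mem_biUnion ⟨n, rfl⟩ rfl
        exact ((hrfin.biUnion (fun y _ => hc y)).subset this)
      exact Set.infinite_univ huniv
    obtain ⟨τ'', hτ''mono, hτ''⟩ := Filter.extraction_of_frequently_atTop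
      (Nat.frequently_atTop_iff_infinite.mpr hSinf)
    have hinj : Function.Injective (Y ∘ τ'') := by
      intro i j hij
      by_contra hne
      rcases Nat.lt_or_ge i j with h | h
      · exact (hτ'' j) (τ'' i) (hτ''mono h) hij
      · have : j < i := lt_of_le_of_ne h (Ne.symm hne)
        exact (hτ'' i) (τ'' j) (hτ''mono this) hij.symm
    exact hK (Y ∘ τ'') p hinj (hconv.comp hτ''mono.tendsto_atTop)


/-- if no subsequence converges, the cluster set is infinite -/
lemma clusterSet_infinite {X : ℕ → K}
    (hnc : ∀ (τ : ℕ → ℕ), StrictMono τ → ∀ p : K,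
      ¬ Tendsto (X ∘ τ) atTop (𝓝 p)) :
    {p : K | MapClusterPt p Filter.atTop X}.Infinite := by
  set C := {p : K | MapClusterPt p Filter.atTop X} with hC
  by_contra hfin
  rw [Set.not_infinite] at hfin
  -- choose for each q ∈ C an open nbhd U q whose closure meets C only in q
  have hU : ∀ q ∈ C, ∃ U : Set K, IsOpen U ∧ q ∈ U ∧ closure U ∩ C ⊆ {q} := by
    intro q hq
    have hclosed : IsClosed (C \ {q}) := ((hfin.subset Set.diff_subset).isClosed)
    have hmem : (C \ {q})ᶜ ∈ 𝓝 q := by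
      apply hclosed.isOpen_compl.mem_nhds
      simp
    obtain ⟨N, hN𝓝, hNcl, hNsub⟩ := exists_mem_nhds_isClosed_subset hmem
    refine ⟨interior N, isOpen_interior, mem_interior_iff_mem_nhds.mpr hN𝓝, ?_⟩
    rintro y ⟨hy1, hy2⟩
    have : y ∈ N := by
      have := closure_minimal interior_subset hNcl
      exact this hy1
    have := hNsub this
    simp only [Set.mem_compl_iff, Set.mem_diff, not_and, not_not] at this
    exact this hy2
  classical
  choose! U hUopen hUmem hUcl using hU
  set G : Set K := ⋃ q ∈ C, U q with hG
  have hGopen : IsOpen G := isOpen_biUnion (fun q hq => hUopen q hq)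
  -- only finitely many n with X n outside G
  have houtfin : {n | X n ∈ Gᶜ}.Finite := by
    rw [← Set.not_infinite]
    intro hinffin
    have hinf : {n | X n ∈ Gᶜ}.Infinite := hinffin
    have hfr : ∃ᶠ y in Filter.map X Filter.atTop, y ∈ Gᶜ :=
      Filter.frequently_map.mpr (Nat.frequently_atTop_iff_infinite.mpr hinf)
    have hne : (Filter.map X Filter.atTop ⊓ Filter.principal {y | y ∈ Gᶜ}).NeBot :=
      Filter.frequently_iff_neBot.mp hfr
    haveI := hne
    obtain ⟨q, hqmem, hclq⟩ := (hGopen.isClosed_compl.isCompact).exists_clusterPt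
      (f := Filter.map X Filter.atTop ⊓ Filter.principal {y | y ∈ Gᶜ}) inf_le_right
    have hqC : q ∈ C := hclq.mono inf_le_left
    exact hqmem (Set.mem_biUnion hqC (hUmem q hqC))
  -- some q ∈ C with infinitely many n such that X n ∈ U q
  have hsome : ∃ q ∈ C, {n | X n ∈ U q}.Infinite := by
    by_contra hall
    push_neg at hall
    have h1 : {n | X n ∈ G}.Finite := by
      have : {n | X n ∈ G} ⊆ ⋃ q ∈ C, {n | X n ∈ U q} := by
        intro n hn
        simp only [hG, Set.mem_iUnion] at hn
        obtain ⟨q, hq, hmem⟩ := hn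
        exact Set.mem_biUnion hq hmem
      exact (hfin.biUnion (fun q hq => hall q hq)).subset this
    have : (Set.univ : Set ℕ).Finite := by
      have : (Set.univ : Set ℕ) ⊆ {n | X n ∈ G} ∪ {n | X n ∈ Gᶜ} := by
        intro n _
        by_cases h : X n ∈ G
        · exact Or.inl h
        · exact Or.inr h
      exact ((h1.union houtfin).subset this)
    exact Set.infinite_univ this
  obtain ⟨q, hqC, hqinf⟩ := hsome
  obtain ⟨τ, hτmono, hτ⟩ := Filter.extraction_of_frequently_atTop
    (Nat.frequently_atTop_iff_infinite.mpr hqinf)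
  -- the subsequence X ∘ τ has q as unique cluster point
  have huniq : ∀ r, MapClusterPt r Filter.atTop (X ∘ τ) → r = q := by
    intro r hr
    have hrC : r ∈ C := mapClusterPt_of_subseq hτmono hr
    have hrcl : r ∈ closure (U q) := by
      have hle : Filter.map (X ∘ τ) Filter.atTop ≤ Filter.principal (U q) := by
        rw [Filter.le_principal_iff, Filter.mem_map]
        filter_upwards [Filter.eventually_atTop.mpr ⟨0, fun n _ => hτ n⟩] with n hn
        exact hn
      rw [mem_closure_iff_clusterPt]
      exact ClusterPt.mono hr hle
    exact (hUcl q hqC) ⟨hrcl, hrC⟩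
  exact hnc τ hτmono q (tendsto_of_unique_clusterPt huniq)


lemma cell_step (S G : Set K) (hS : S.Infinite) (hG : IsOpen G) (hSG : S ⊆ G) :
    ∃ (q : K) (O : Set K) (S' G' : Set K), q ∈ S ∧ IsOpen O ∧ q ∈ O ∧ O ⊆ G ∧ IsOpen G' ∧
      S'.Infinite ∧ S' ⊆ S ∧ S' ⊆ G' ∧ G' ⊆ G ∧ Disjoint O G' := by
  obtain ⟨a, ha, b, hb, hab⟩ := hS.nontrivial
  obtain ⟨Ua, Ub, hUaop, hUbop, haUa, hbUb, hUab⟩ := t2_separation hab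
  obtain ⟨Na, hNa𝓝, hNacl, hNasub⟩ := exists_mem_nhds_isClosed_subset
    ((hG.inter hUaop).mem_nhds ⟨hSG ha, haUa⟩)
  obtain ⟨Nb, hNb𝓝, hNbcl, hNbsub⟩ := exists_mem_nhds_isClosed_subset
    ((hG.inter hUbop).mem_nhds ⟨hSG hb, hbUb⟩)
  by_cases hinf : (S \ Na).Infinite
  · refine ⟨a, interior Na, S \ Na, G \ Na, ha, isOpen_interior,
      mem_interior_iff_mem_nhds.mpr hNa𝓝, fun y hy => (hNasub (interior_subset hy)).1,
      hG.sdiff hNacl, hinf, Set.diff_subset, ?_, Set.diff_subset, ?_⟩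
    · rintro y ⟨hy1, hy2⟩; exact ⟨hSG hy1, hy2⟩
    · rw [Set.disjoint_left]
      rintro y hy ⟨_, hy2⟩
      exact hy2 (interior_subset hy)
  · rw [Set.not_infinite] at hinf
    have hSNa : (S ∩ Na).Infinite := by
      by_contra hfin
      rw [Set.not_infinite] at hfin
      exact hS ((hfin.union hinf).subset (fun y hy => by
        by_cases h : y ∈ Na
        · exact Or.inl ⟨hy, h⟩
        · exact Or.inr ⟨hy, h⟩))
    have hsub : S ∩ Na ⊆ S \ Nb := by
      rintro y ⟨hy1, hy2⟩
      refine ⟨hy1, fun hy3 => ?_⟩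
      have h1 : y ∈ Ua := (hNasub hy2).2
      have h2 : y ∈ Ub := (hNbsub hy3).2
      exact Set.disjoint_left.mp hUab h1 h2
    refine ⟨b, interior Nb, S \ Nb, G \ Nb, hb, isOpen_interior,
      mem_interior_iff_mem_nhds.mpr hNb𝓝, fun y hy => (hNbsub (interior_subset hy)).1,
      hG.sdiff hNbcl, hSNa.mono hsub, Set.diff_subset, ?_,
      Set.diff_subset, ?_⟩
    · rintro y ⟨hy1, hy2⟩; exact ⟨hSG hy1, hy2⟩
    · rw [Set.disjoint_left]
      rintro y hy ⟨_, hy2⟩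
      exact hy2 (interior_subset hy)

lemma cellular {C : Set K} (hC : C.Infinite) :
    ∃ (p : ℕ → K) (O : ℕ → Set K), (∀ m, p m ∈ C) ∧ (∀ m, IsOpen (O m)) ∧
      (∀ m, p m ∈ O m) ∧ (∀ i j, i ≠ j → Disjoint (O i) (O j)) := by
  classical
  set St := {SG : Set K × Set K // SG.1.Infinite ∧ IsOpen SG.2 ∧ SG.1 ⊆ SG.2} with hSt
  have key : ∀ st : St, ∃ (q : K) (O : Set K) (st' : St),
      q ∈ st.1.1 ∧ IsOpen O ∧ q ∈ O ∧ O ⊆ st.1.2 ∧ st'.1.1 ⊆ st.1.1 ∧ st'.1.2 ⊆ st.1.2 ∧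
        Disjoint O st'.1.2 := by
    rintro ⟨⟨S, G⟩, hS, hG, hSG⟩
    obtain ⟨q, O, S', G', hq, hO, hqO, hOG, hG', hS', hS'S, hS'G', hG'G, hdisj⟩ :=
      cell_step S G hS hG hSG
    exact ⟨q, O, ⟨(S', G'), hS', hG', hS'G'⟩, hq, hO, hqO, hOG, hS'S, hG'G, hdisj⟩
  choose q O next hq hO hqO hOG hnextS hnextG hdisj using key
  set chain : ℕ → St := fun m => Nat.rec
    (⟨(C, Set.univ), hC, isOpen_univ, Set.subset_univ C⟩ : St) (fun _ st => next st) m with hchain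
  have hchainsucc : ∀ m, chain (m + 1) = next (chain m) := fun m => rfl
  -- S decreasing, contained in C
  have hSsub : ∀ m, (chain m).1.1 ⊆ C := by
    intro m
    induction m with
    | zero => exact fun y hy => hy
    | succ n ih => rw [hchainsucc n]; exact fun y hy => ih (hnextS (chain n) hy)
  -- G decreasing
  have hGmono : ∀ m n, m ≤ n → (chain n).1.2 ⊆ (chain m).1.2 := by
    intro m n hmn
    induction n with
    | zero => rw [Nat.le_zero.mp hmn]
    | succ k ih =>
      rcases Nat.lt_or_ge m (k+1) with h | h
      · have h1 : (chain (k+1)).1.2 ⊆ (chain k).1.2 := by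
          rw [hchainsucc k]; exact hnextG (chain k)
        exact h1.trans (ih (Nat.lt_succ_iff.mp h))
      · rw [Nat.le_antisymm hmn h]
  -- we only need: O j ⊆ (chain j).1.2 for disjointness argument via (chain (i+1)).1.2
  have hOsub : ∀ m, O (chain m) ⊆ (chain m).1.2 := fun m => hOG (chain m)
  refine ⟨fun m => q (chain m), fun m => O (chain m), fun m => hSsub m (hq (chain m)),
    fun m => hO (chain m), fun m => hqO (chain m), ?_⟩
  have main : ∀ i j, i < j → Disjoint (O (chain i)) (O (chain j)) := by
    intro i j hij
    have h1 : O (chain j) ⊆ (chain j).1.2 := hOsub j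
    have h2 : (chain j).1.2 ⊆ (chain (i+1)).1.2 := hGmono (i+1) j hij
    have h3 : (chain (i+1)).1.2 = (next (chain i)).1.2 := by rw [hchainsucc i]
    have h4 : Disjoint (O (chain i)) ((next (chain i)).1.2) := hdisj (chain i)
    exact h4.mono_right (h3 ▸ (h1.trans h2))
  intro i j hij
  rcases Nat.lt_or_ge i j with h | h
  · exact main i j h
  · exact (main j i (lt_of_le_of_ne h (Ne.symm hij))).symm


end AuxLemmas

set_option maxHeartbeats 1000000 in
set_option synthInstance.maxHeartbeats 200000 in
/-- If `K` has no non-trivial convergent sequence and there exists an operator on `C(K, ℝ)`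
which is not a weak multiplier, then the set of non weak multipliers is lineable. -/
theorem lineable_nonWeakMultipliers_of_no_convergent_sequence
    {K : Type*} [TopologicalSpace K] [CompactSpace K] [T2Space K]
    (hK : ∀ (x : ℕ → K) (p : K), Function.Injective x →
      ¬ Filter.Tendsto x Filter.atTop (nhds p))
    (h : ∃ T : C(K, ℝ) →L[ℝ] C(K, ℝ), ¬ IsWeakMultiplier T) :
    Lineable {T : C(K, ℝ) →L[ℝ] C(K, ℝ) | ¬ IsWeakMultiplier T} := by
  classical
  obtain ⟨T, hT⟩ := h
  rw [IsWeakMultiplier] at hT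
  push_neg at hT
  obtain ⟨e, x, hbdd, hdisj, hz, hnt⟩ := hT
  obtain ⟨M, hM⟩ := hbdd
  -- find δ > 0 with frequently δ ≤ |T(e n)(x n)|
  have hfr : ∃ δ > (0:ℝ), ∃ᶠ n in atTop, δ ≤ |(T (e n)) (x n)| := by
    by_contra hcon
    push_neg at hcon
    apply hnt
    rw [Metric.tendsto_atTop]
    intro ε hε
    have h2 := hcon (ε/2) (by linarith)
    rw [Filter.eventually_atTop] at h2
    obtain ⟨N, hN⟩ := h2
    refine ⟨N, fun n hn => ?_⟩
    have := hN n hn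
    rw [Real.dist_eq, sub_zero]
    linarith
  obtain ⟨δ, hδ, hfreq⟩ := hfr
  obtain ⟨σ, hσmono, hσ⟩ := Filter.extraction_of_frequently_atTop hfreq
  set E : ℕ → C(K, ℝ) := e ∘ σ with hE
  set X : ℕ → K := x ∘ σ with hX
  have hbM : ∀ n, ‖E n‖ ≤ M := fun n => hM _
  have hd : ∀ i j, i ≠ j → E i * E j = 0 :=
    fun i j hij => hdisj _ _ fun hh => hij (hσmono.injective hh)
  have hz' : ∀ n, (E n) (X n) = 0 := fun n => hz _
  have hval : ∀ n, δ ≤ |(T (E n)) (X n)| := fun n => hσ n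
  -- cluster set infinite
  have hCinf : {p : K | MapClusterPt p Filter.atTop X}.Infinite := by
    apply clusterSet_infinite
    intro τ hτ p hconv
    exact no_conv_subseq hK T hδ hbM hd hval τ hτ p hconv
  obtain ⟨p, O, hpC, hOop, hpO, hOdisj⟩ := cellular hCinf
  -- Urysohn functions
  have hw : ∀ k, ∃ w : C(K, ℝ), Set.EqOn (⇑w) 0 ((O k)ᶜ) ∧ Set.EqOn (⇑w) 1 {p k} := by
    intro k
    obtain ⟨w, h1, h2, _⟩ := exists_continuous_zero_one_of_isClosed
      (isClosed_compl_iff.mpr (hOop k)) (isClosed_singleton (x := p k))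
      (by rw [Set.disjoint_left]; rintro y hy rfl; exact hy (hpO k))
    exact ⟨w, h1, h2⟩
  choose w hw0 hw1 using hw
  -- the linear map g ↦ M_g ∘ T
  obtain ⟨Amap, hAmap⟩ : ∃ A : C(K, ℝ) →ₗ[ℝ] (C(K, ℝ) →L[ℝ] C(K, ℝ)),
      ∀ g, A g = (ContinuousLinearMap.mul ℝ C(K, ℝ) g).comp T :=
    ⟨{ toFun := fun g => (ContinuousLinearMap.mul ℝ C(K, ℝ) g).comp T,
       map_add' := by
         intro a b
         rw [map_add, ContinuousLinearMap.add_comp]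
       map_smul' := by
         intro c a
         rw [map_smul, RingHom.id_apply, ContinuousLinearMap.smul_comp] }, fun g => rfl⟩
  -- main claim: nonzero combinations are not weak multipliers
  have hmain : ∀ c : ℕ →₀ ℝ, c ≠ 0 →
      ¬ IsWeakMultiplier (Amap (c.sum fun k a => a • w k)) := by
    intro c hc0 hWM
    obtain ⟨k, hk⟩ : ∃ k, c k ≠ 0 := by
      by_contra hall
      push_neg at hall
      exact hc0 (Finsupp.ext hall)
    set v : C(K, ℝ) := c.sum fun k a => a • w k with hv
    have hvpk : v (p k) = c k := by
      rw [hv, Finsupp.sum, ContinuousMap.sum_apply]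
      rw [Finset.sum_eq_single_of_mem k (Finsupp.mem_support_iff.mpr hk)]
      · rw [ContinuousMap.smul_apply, hw1 k rfl]
        simp
      · intro j _ hjk
        rw [ContinuousMap.smul_apply]
        have hpknot : p k ∉ O j := fun hmem =>
          Set.disjoint_left.mp (hOdisj j k hjk) hmem (hpO k)
        rw [hw0 j hpknot]
        simp
    -- frequently |v (X n)| > |c k|/2
    have hUopen : IsOpen {y : K | |c k| / 2 < |v y|} := by
      have : Continuous fun y => |v y| := v.continuous.abs
      exact isOpen_lt continuous_const this
    have hUmem : {y : K | |c k| / 2 < |v y|} ∈ 𝓝 (p k) := by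
      apply hUopen.mem_nhds
      simp only [Set.mem_setOf_eq, hvpk]
      have : 0 < |c k| := abs_pos.mpr hk
      linarith
    have hfreq2 : ∃ᶠ n in atTop, |c k| / 2 < |v (X n)| :=
      mapClusterPt_iff_frequently.mp (hpC k) _ hUmem
    -- tendsto from WM assumption
    have hTend := hWM E X ⟨M, hbM⟩ hd hz'
    have hev : ∀ᶠ n in atTop, |(Amap v (E n)) (X n)| < |c k| / 2 * δ := by
      have hpos : 0 < |c k| / 2 * δ := by
        have : 0 < |c k| := abs_pos.mpr hk
        positivity
      have := hTend (Metric.ball_mem_nhds 0 hpos)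
      rw [Filter.mem_map] at this
      filter_upwards [this] with n hn
      rw [Set.mem_preimage, Metric.mem_ball, Real.dist_eq, sub_zero] at hn
      exact hn
    obtain ⟨n, hn1, hn2⟩ := (hfreq2.and_eventually hev).exists
    have hcalc : (Amap v (E n)) (X n) = v (X n) * (T (E n)) (X n) := by
      rw [hAmap v]
      simp only [ContinuousLinearMap.comp_apply,
        ContinuousLinearMap.mul_apply', ContinuousMap.mul_apply]
    rw [hcalc] at hn2
    rw [abs_mul] at hn2
    have hge : |c k| / 2 * δ ≤ |v (X n)| * |(T (E n)) (X n)| := by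
      apply mul_le_mul (le_of_lt hn1) (hval n) (le_of_lt hδ) (abs_nonneg _)
    linarith
  -- the submodule
  refine ⟨Submodule.span ℝ (Set.range fun k => Amap (w k)), ?_, ?_⟩
  · intro hFD
    have hli : LinearIndependent ℝ (fun k => Amap (w k)) := by
      rw [linearIndependent_iff]
      intro l hl
      by_contra hl0
      apply hmain l hl0
      have heq : Amap (l.sum fun k a => a • w k) = 0 := by
        rw [map_finsuppSum]
        rw [Finsupp.linearCombination_apply] at hl
        rw [← hl]
        apply Finsupp.sum_congr
        intro i _
        rw [map_smul]
      rw [heq]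
      intro e' x' _ _ _
      simpa using tendsto_const_nhds
    have hli' : LinearIndependent ℝ (M := Submodule.span ℝ (Set.range fun k => Amap (w k)))
        (fun i => ⟨Amap (w i), Submodule.subset_span (Set.mem_range_self i)⟩) :=
      linearIndependent_span hli
    exact Module.Finite.not_linearIndependent_of_infinite
      (R := ℝ) (M := Submodule.span ℝ (Set.range fun k => Amap (w k))) _ hli'
  · intro S hS
    rw [SetLike.mem_coe, Finsupp.mem_span_range_iff_exists_finsupp] at hS
    obtain ⟨c, hc⟩ := hS
    by_cases hc0 : c = 0
    · right
      rw [← hc, hc0]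
      simp
    · left
      have heq : S = Amap (c.sum fun k a => a • w k) := by
        rw [← hc, map_finsuppSum]
        apply Finsupp.sum_congr
        intro i _
        rw [map_smul]
      rw [Set.mem_setOf_eq, heq]
      exact hmain c hc0
end
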